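/- Let E ⊆ ℝⁿ (n ≥ 1) be a bounded convex set with nonempty interior and s ∈ (0,1). Then the fractional s-perimeter Per_s(E) = s(1−s) ∫_E ∫_{Eᶜ} |x−y|^{−(n+s)} dy dx satisfies Per_s(E) ≥ c (w̲(E))^{−s} |E| for a constant c > 0 depending only on n and s, where w̲(E) is the minimal width of E and |E| its Lebesgue measure. Equivalently, w̲(E) ≥ c' (|E| / Per_s(E))^{1/s}. -/

import Mathlib

open Metric Set MeasureTheory Topology Filter

theorem fracPer_ge_width_lower_bound (n : ℕ) (hn : 1 ≤ n) (s : ℝ)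
    (hs : s ∈ Set.Ioo (0 : ℝ) 1) :
    ∃ c > (0 : ℝ), ∀ E : Set (EuclideanSpace ℝ (Fin n)),
      Bornology.IsBounded E → Convex ℝ E → (interior E).Nonempty →
      MeasurableSet E →
      ENNReal.ofReal
          (c * (sInf {w : ℝ | ∃ ω : EuclideanSpace ℝ (Fin n), ‖ω‖ = 1 ∧
              w = sSup {a : ℝ | ∃ x ∈ E, ∃ y ∈ E, a = inner ℝ (x - y) ω}}) ^ (-s)
            * (volume E).toReal)
        ≤ ENNReal.ofReal (s * (1 - s)) *
            ∫⁻ x in E, ∫⁻ y in Eᶜ, ENNReal.ofReal (dist x y ^ (-((n : ℝ) + s))) := by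
  obtain ⟨hs0, hs1⟩ := hs
  haveI : Nontrivial (EuclideanSpace ℝ (Fin n)) :=
    Module.nontrivial_of_finrank_pos (R := ℝ) (by rw [finrank_euclideanSpace_fin]; omega)
  set v : ℝ := (volume (ball (0 : EuclideanSpace ℝ (Fin n)) 1)).toReal with hv
  have hvpos : 0 < v :=
    ENNReal.toReal_pos (measure_ball_pos volume 0 one_pos).ne' measure_ball_lt_top.ne
  have hv1 : volume (ball (0 : EuclideanSpace ℝ (Fin n)) 1) = ENNReal.ofReal v :=
    (ENNReal.ofReal_toReal measure_ball_lt_top.ne).symm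
  have hcpos : 0 < s * (1 - s) * (4:ℝ) ^ (-((n:ℝ)+s)) * v :=
    mul_pos (mul_pos (mul_pos hs0 (by linarith)) (Real.rpow_pos_of_pos (by norm_num) _)) hvpos
  refine ⟨s * (1 - s) * (4:ℝ) ^ (-((n:ℝ)+s)) * v, hcpos, ?_⟩
  intro E hEb hEc hEi hEm
  set c := s * (1 - s) * (4:ℝ) ^ (-((n:ℝ)+s)) * v with hc
  set V : ℝ := (volume E).toReal with hV
  have hV0 : 0 ≤ V := ENNReal.toReal_nonneg
  have hVE : volume E = ENNReal.ofReal V :=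
    (ENNReal.ofReal_toReal (hEb.measure_lt_top).ne).symm
  obtain ⟨z, hz⟩ := hEi
  obtain ⟨r, hr0, hrball⟩ := Metric.isOpen_iff.mp isOpen_interior z hz
  have hrE : ball z r ⊆ E := hrball.trans interior_subset
  obtain ⟨R, hER⟩ := hEb.subset_ball 0
  set S : Set ℝ := {w : ℝ | ∃ ω : EuclideanSpace ℝ (Fin n), ‖ω‖ = 1 ∧
      w = sSup {a : ℝ | ∃ x ∈ E, ∃ y ∈ E, a = inner ℝ (x - y) ω}} with hSdef
  -- boundedness of the inner sets
  have hTbdd : ∀ ω : EuclideanSpace ℝ (Fin n), ‖ω‖ = 1 →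
      BddAbove {a : ℝ | ∃ x ∈ E, ∃ y ∈ E, a = inner ℝ (x - y) ω} := by
    intro ω hω
    refine ⟨2 * R, ?_⟩
    rintro a ⟨x, hx, y, hy, rfl⟩
    have h1 : (inner ℝ (x - y) ω : ℝ) ≤ ‖x - y‖ * ‖ω‖ := real_inner_le_norm _ _
    have hx' : ‖x‖ < R := by simpa [mem_ball_zero_iff] using hER hx
    have hy' : ‖y‖ < R := by simpa [mem_ball_zero_iff] using hER hy
    have h2 : ‖x - y‖ ≤ ‖x‖ + ‖y‖ := norm_sub_le _ _
    rw [hω, mul_one] at h1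
    linarith
  -- each width is at least r
  have hrT : ∀ ω : EuclideanSpace ℝ (Fin n), ‖ω‖ = 1 →
      r ≤ sSup {a : ℝ | ∃ x ∈ E, ∃ y ∈ E, a = inner ℝ (x - y) ω} := by
    intro ω hω
    have hmem : ∀ t : ℝ, |t| < r → z + t • ω ∈ E := by
      intro t ht
      apply hrE
      rw [mem_ball, dist_eq_norm]
      have h : z + t • ω - z = t • ω := by abel
      rw [h, norm_smul, hω, mul_one]
      simpa using ht
    have hx : z + (r/2) • ω ∈ E := hmem _ (by rw [abs_of_pos (by linarith)]; linarith)
    have hy : z + (-(r/2)) • ω ∈ E := hmem _ (by rw [abs_of_neg (by linarith)]; linarith)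
    apply le_csSup (hTbdd ω hω)
    refine ⟨_, hx, _, hy, ?_⟩
    have hxy : (z + (r/2) • ω) - (z + (-(r/2)) • ω) = r • ω := by
      have : (r : ℝ) • ω = (r/2) • ω - (-(r/2)) • ω := by
        rw [← sub_smul]; congr 1; ring
      rw [this]; abel
    rw [hxy, real_inner_smul_left, real_inner_self_eq_norm_mul_norm, hω]
    ring
  have hSr : ∀ w ∈ S, r ≤ w := by
    rintro w ⟨ω, hω, rfl⟩
    exact hrT ω hω
  have hSne : S.Nonempty := by
    refine ⟨_, ⟨EuclideanSpace.single (⟨0, by omega⟩ : Fin n) (1:ℝ), ?_, rfl⟩⟩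
    rw [EuclideanSpace.norm_single]
    simp
  -- the key estimate for every width in S
  have key : ∀ w ∈ S, ENNReal.ofReal (c * w ^ (-s) * V) ≤
      ENNReal.ofReal (s * (1 - s)) *
        ∫⁻ x in E, ∫⁻ y in Eᶜ, ENNReal.ofReal (dist x y ^ (-((n : ℝ) + s))) := by
    rintro w hwS
    obtain ⟨ω, hω, hwdef⟩ := hwS
    have hw0 : 0 < w := lt_of_lt_of_le hr0 (hSr w ⟨ω, hω, hwdef⟩)
    -- the ball around x + 3w ω is in the complement of E
    have hball : ∀ x ∈ E, ball (x + (3*w) • ω) w ⊆ Eᶜ := by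
      intro x hx u hu huE
      have h1 : (inner ℝ (u - x) ω : ℝ) ≤ w := by
        rw [hwdef]
        exact le_csSup (hTbdd ω hω) ⟨u, huE, x, hx, rfl⟩
      have hdist : ‖u - (x + (3*w) • ω)‖ < w := by rwa [mem_ball, dist_eq_norm] at hu
      have h2 : -‖u - (x + (3*w) • ω)‖ ≤ (inner ℝ (u - (x + (3*w) • ω)) ω : ℝ) := by
        have h := abs_real_inner_le_norm (u - (x + (3*w) • ω)) ω
        rw [hω, mul_one] at h
        have := neg_abs_le (inner ℝ (u - (x + (3*w) • ω)) ω : ℝ)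
        linarith
      have h3 : u - x = (u - (x + (3*w) • ω)) + (3*w) • ω := by abel
      have h4 : (inner ℝ (u - x) ω : ℝ) = inner ℝ (u - (x + (3*w) • ω)) ω + 3*w := by
        rw [h3, inner_add_left, real_inner_smul_left, real_inner_self_eq_norm_mul_norm, hω]
        ring
      linarith
    -- inner integral lower bound
    have hinner : ∀ x ∈ E,
        ENNReal.ofReal ((4*w) ^ (-((n:ℝ)+s)) * (w ^ n * v)) ≤
          ∫⁻ y in Eᶜ, ENNReal.ofReal (dist x y ^ (-((n:ℝ)+s))) := by
      intro x hx
      have hb : volume (ball (x + (3*w) • ω) w) = ENNReal.ofReal (w ^ n) * ENNReal.ofReal v := by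
        rw [Measure.addHaar_ball volume _ hw0.le, finrank_euclideanSpace_fin, hv1]
      calc ENNReal.ofReal ((4*w) ^ (-((n:ℝ)+s)) * (w ^ n * v))
          = ENNReal.ofReal ((4*w) ^ (-((n:ℝ)+s))) * volume (ball (x + (3*w) • ω) w) := by
            rw [hb, ENNReal.ofReal_mul (Real.rpow_nonneg (by linarith) _),
              ENNReal.ofReal_mul (pow_nonneg hw0.le n)]
        _ = ∫⁻ _ in ball (x + (3*w) • ω) w, ENNReal.ofReal ((4*w) ^ (-((n:ℝ)+s))) :=
            (setLIntegral_const _ _).symm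
        _ ≤ ∫⁻ y in ball (x + (3*w) • ω) w, ENNReal.ofReal (dist x y ^ (-((n:ℝ)+s))) := by
            apply lintegral_mono_ae
            rw [ae_restrict_iff' measurableSet_ball]
            apply ae_of_all
            intro u hu
            have hdcu : dist (x + (3*w) • ω) u < w := by rwa [mem_ball, dist_comm] at hu
            have hdxc : dist x (x + (3*w) • ω) = 3*w := by
              rw [dist_eq_norm]
              have h : x - (x + (3*w) • ω) = (-(3*w)) • ω := by
                rw [neg_smul]; abel
              rw [h, norm_smul, hω, mul_one, Real.norm_eq_abs, abs_neg,
                abs_of_pos (by linarith)]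
            have hle : dist x u ≤ 4*w := by
              have h := dist_triangle x (x + (3*w) • ω) u
              linarith
            have hgt : 0 < dist x u := by
              have h := dist_triangle x u (x + (3*w) • ω)
              have h2 : dist u (x + (3*w) • ω) < w := by rwa [dist_comm] at hdcu
              linarith
            exact ENNReal.ofReal_le_ofReal
              (Real.rpow_le_rpow_of_nonpos hgt hle (neg_nonpos.mpr (by positivity)))
        _ ≤ ∫⁻ y in Eᶜ, ENNReal.ofReal (dist x y ^ (-((n:ℝ)+s))) :=
            lintegral_mono_set (hball x hx)
    -- outer integral lower bound
    have houter : ENNReal.ofReal ((4*w) ^ (-((n:ℝ)+s)) * (w ^ n * v)) * volume E ≤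
        ∫⁻ x in E, ∫⁻ y in Eᶜ, ENNReal.ofReal (dist x y ^ (-((n:ℝ)+s))) := by
      rw [← setLIntegral_const E _]
      apply lintegral_mono_ae
      rw [ae_restrict_iff' hEm]
      exact ae_of_all _ hinner
    calc ENNReal.ofReal (c * w ^ (-s) * V)
        = ENNReal.ofReal (s * (1-s)) *
            (ENNReal.ofReal ((4*w) ^ (-((n:ℝ)+s)) * (w ^ n * v)) * ENNReal.ofReal V) := by
          have hX : (0:ℝ) ≤ (4*w) ^ (-((n:ℝ)+s)) * (w ^ n * v) :=
            mul_nonneg (Real.rpow_nonneg (by linarith) _)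
              (mul_nonneg (pow_nonneg hw0.le n) hvpos.le)
          rw [← ENNReal.ofReal_mul hX, ← ENNReal.ofReal_mul (by nlinarith : (0:ℝ) ≤ s*(1-s))]
          congr 1
          have h4w : (4*w) ^ (-((n:ℝ)+s)) = (4:ℝ) ^ (-((n:ℝ)+s)) * w ^ (-((n:ℝ)+s)) :=
            Real.mul_rpow (by norm_num) hw0.le
          have hwn : (w:ℝ) ^ n = w ^ ((n:ℝ)) := (Real.rpow_natCast w n).symm
          have hws : w ^ (-((n:ℝ)+s)) * w ^ ((n:ℝ)) = w ^ (-s) := by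
            rw [← Real.rpow_add hw0]
            congr 1
            ring
          rw [hc, h4w, hwn, ← hws]
          ring
      _ = ENNReal.ofReal (s * (1-s)) *
            (ENNReal.ofReal ((4*w) ^ (-((n:ℝ)+s)) * (w ^ n * v)) * volume E) := by
          rw [hVE]
      _ ≤ _ := mul_le_mul_right houter _
  -- pass to the infimum
  have hW0 : 0 < sInf S := lt_of_lt_of_le hr0 (le_csInf hSne hSr)
  have hstep : ∀ ε ∈ Ioi (0:ℝ), ENNReal.ofReal (c * (sInf S + ε) ^ (-s) * V) ≤
      ENNReal.ofReal (s * (1 - s)) *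
        ∫⁻ x in E, ∫⁻ y in Eᶜ, ENNReal.ofReal (dist x y ^ (-((n : ℝ) + s))) := by
    intro ε hε
    rw [mem_Ioi] at hε
    obtain ⟨w, hwS, hwlt⟩ := exists_lt_of_csInf_lt hSne (by linarith : sInf S < sInf S + ε)
    refine le_trans (ENNReal.ofReal_le_ofReal ?_) (key w hwS)
    have hw0 : 0 < w := lt_of_lt_of_le hr0 (hSr w hwS)
    have h1 : (sInf S + ε) ^ (-s) ≤ w ^ (-s) :=
      Real.rpow_le_rpow_of_nonpos hw0 hwlt.le (by linarith)
    exact mul_le_mul_of_nonneg_right (mul_le_mul_of_nonneg_left h1 hcpos.le) hV0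
  have htends : Filter.Tendsto (fun ε : ℝ => ENNReal.ofReal (c * (sInf S + ε) ^ (-s) * V))
      (nhdsWithin 0 (Ioi 0)) (𝓝 (ENNReal.ofReal (c * (sInf S) ^ (-s) * V))) := by
    have h1 : Filter.Tendsto (fun ε : ℝ => sInf S + ε) (nhdsWithin 0 (Ioi 0)) (𝓝 (sInf S)) := by
      have h : Filter.Tendsto (fun ε : ℝ => sInf S + ε) (𝓝 0) (𝓝 (sInf S + 0)) :=
        (continuous_const.add continuous_id).tendsto 0
      rw [add_zero] at h
      exact h.mono_left nhdsWithin_le_nhds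
    have h2 : Filter.Tendsto (fun ε : ℝ => c * (sInf S + ε) ^ (-s) * V)
        (nhdsWithin 0 (Ioi 0)) (𝓝 (c * (sInf S) ^ (-s) * V)) :=
      ((h1.rpow_const (Or.inl hW0.ne')).const_mul c).mul_const V
    exact (ENNReal.continuous_ofReal.tendsto _).comp h2
  exact le_of_tendsto htends (Filter.mem_of_superset self_mem_nhdsWithin hstep)
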